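/- Let N be a positive even integer and b an integer with 0 < b < N/2. Let c := gcd(N/2, b), d := lcm(N/2, b), M := 2c, let m₀, n₀ ∈ ℤ satisfy (N/2)m₀ + b n₀ = c, and let φ = (φ₁,φ₂) with φ(m,n) = (m m₀ − (2d/N) n, m n₀ + (d/b) n). Then for all m,n ∈ ℤ: (φ₁(m,n)·(N/2) + φ₂(m,n)·b, −φ₁(m,n)·n₀/(2c) − φ₂(m,n)·b n₀/(cN) + φ₂(m,n)/N) = (m·M/2, n/M), where the second coordinates are real numbers. -/

import Mathlib

/-- The map `φ(m,n) = (m m₀ - (2d/N) n, m n₀ + (d/b) n)` (with `d = lcm(N/2, b)`),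
and `φ = id` when `b = 0`. -/
def phiZ (N b : ℕ) (m₀ n₀ : ℤ) : ℤ × ℤ → ℤ × ℤ := fun mn =>
  if b = 0 then mn
  else (mn.1 * m₀ - (2 * (Nat.lcm (N / 2) b : ℤ) / (N : ℤ)) * mn.2,
        mn.1 * n₀ + ((Nat.lcm (N / 2) b : ℤ) / (b : ℤ)) * mn.2)

/-- With `c = gcd(N/2,b)`, `d = lcm(N/2,b)`, `M = 2c`, `(N/2)m₀ + bn₀ = c`, and `φ` as
above: for all `m, n ∈ ℤ`,
`(φ₁(m,n)(N/2) + φ₂(m,n)b, -φ₁(m,n)n₀/(2c) - φ₂(m,n)bn₀/(cN) + φ₂(m,n)/N) = (mM/2, n/M)`. -/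
theorem stmt_11 (N b : ℕ) (hN : 0 < N) (hNe : Even N) (hb0 : 0 < b) (hb : b < N / 2)
    (m₀ n₀ : ℤ)
    (hmn : ((N / 2 : ℕ) : ℤ) * m₀ + (b : ℤ) * n₀ = (Nat.gcd (N / 2) b : ℤ))
    (m n : ℤ) :
    ((phiZ N b m₀ n₀ (m, n)).1 * ((N / 2 : ℕ) : ℤ) + (phiZ N b m₀ n₀ (m, n)).2 * (b : ℤ)
        = m * ((2 * Nat.gcd (N / 2) b / 2 : ℕ) : ℤ)) ∧
    (-(((phiZ N b m₀ n₀ (m, n)).1 : ℝ) * (n₀ : ℝ)) / (2 * (Nat.gcd (N / 2) b : ℝ))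
        - ((phiZ N b m₀ n₀ (m, n)).2 : ℝ) * (b : ℝ) * (n₀ : ℝ)
            / ((Nat.gcd (N / 2) b : ℝ) * (N : ℝ))
        + ((phiZ N b m₀ n₀ (m, n)).2 : ℝ) / (N : ℝ)
      = (n : ℝ) / ((2 * Nat.gcd (N / 2) b : ℕ) : ℝ)) := by
  have h2 : N / 2 * 2 = N := Nat.div_mul_cancel hNe.two_dvd
  set c : ℕ := Nat.gcd (N / 2) b with hc
  set d : ℕ := Nat.lcm (N / 2) b with hd
  have hc0 : 0 < c := Nat.gcd_pos_of_pos_right _ hb0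
  have hh0 : 0 < N / 2 := lt_trans hb0 hb
  -- a = (N/2)/c, e = b/c
  obtain ⟨a, ha⟩ := Nat.gcd_dvd_left (N / 2) b
  obtain ⟨e, he⟩ := Nat.gcd_dvd_right (N / 2) b
  have hde : d = N / 2 * e := by
    have := Nat.gcd_mul_lcm (N / 2) b
    rw [← hc, ← hd] at this
    have h1 : c * d = c * (N / 2 * e) := by
      rw [this, he]; ring
    exact Nat.eq_of_mul_eq_mul_left hc0 h1
  have hda : d = a * b := by
    have := Nat.gcd_mul_lcm (N / 2) b
    rw [← hc, ← hd] at this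
    have h1 : c * d = c * (a * b) := by
      rw [this, ha]; ring
    exact Nat.eq_of_mul_eq_mul_left hc0 h1
  have hdivN : (2 * (d : ℤ)) / (N : ℤ) = (e : ℤ) := by
    have : 2 * (d : ℤ) = (N : ℤ) * (e : ℤ) := by
      have : (d : ℤ) = (N / 2 : ℕ) * (e : ℤ) := by exact_mod_cast hde
      rw [this]
      have hN2 : ((N / 2 : ℕ) : ℤ) * 2 = (N : ℤ) := by exact_mod_cast h2
      linear_combination (e : ℤ) * hN2
    rw [this]
    exact Int.mul_ediv_cancel_left _ (by exact_mod_cast hN.ne')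
  have hdivb : (d : ℤ) / (b : ℤ) = (a : ℤ) := by
    have : (d : ℤ) = (a : ℤ) * (b : ℤ) := by exact_mod_cast hda
    rw [this]
    exact Int.mul_ediv_cancel _ (by exact_mod_cast hb0.ne')
  have hbne : b ≠ 0 := hb0.ne'
  have hphi1 : (phiZ N b m₀ n₀ (m, n)).1 = m * m₀ - (e : ℤ) * n := by
    simp [phiZ, hbne, hdivN]
    exact Or.inl hdivN
  have hphi2 : (phiZ N b m₀ n₀ (m, n)).2 = m * n₀ + (a : ℤ) * n := by
    simp [phiZ, hbne, hdivb]
    exact Or.inl hdivb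
  have hce : (c : ℤ) * e = (b : ℤ) := by exact_mod_cast he.symm
  have hca : (c : ℤ) * a = ((N / 2 : ℕ) : ℤ) := by exact_mod_cast ha.symm
  have hN2 : ((N / 2 : ℕ) : ℤ) * 2 = (N : ℤ) := by exact_mod_cast h2
  constructor
  · rw [hphi1, hphi2]
    have : ((2 * c / 2 : ℕ) : ℤ) = (c : ℤ) := by
      norm_num
    rw [this]
    linear_combination m * hmn - n * (a : ℤ) * hce + n * (e : ℤ) * hca
  · rw [hphi1, hphi2]
    have hcR : (c : ℝ) ≠ 0 := by exact_mod_cast hc0.ne'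
    have hNR : (N : ℝ) ≠ 0 := by exact_mod_cast hN.ne'
    have hceR : (c : ℝ) * e = (b : ℝ) := by exact_mod_cast he.symm
    have hcaR : (c : ℝ) * a = ((N / 2 : ℕ) : ℝ) := by exact_mod_cast ha.symm
    have hN2R : ((N / 2 : ℕ) : ℝ) * 2 = (N : ℝ) := by exact_mod_cast h2
    have hmnR : ((N / 2 : ℕ) : ℝ) * (m₀ : ℝ) + (b : ℝ) * (n₀ : ℝ) = (c : ℝ) := by
      have := congrArg (Int.cast : ℤ → ℝ) hmn
      push_cast at this
      exact this
    rw [← hcaR, ← hceR] at hmnR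
    push_cast
    rw [← hN2R, ← hcaR, ← hceR]
    have ha0 : 0 < a := Nat.pos_of_ne_zero (by rintro rfl; simp at ha; omega)
    have haR : (a : ℝ) ≠ 0 := by exact_mod_cast ha0.ne'
    field_simp
    have h' : (a : ℝ) * m₀ + e * n₀ = 1 := mul_left_cancel₀ hcR (by linear_combination hmnR)
    linear_combination (-(n₀ : ℝ) * (m : ℝ)) * h'
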